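/- Let (f_t)_{t≥0} be Fréchet-differentiable functions of weights W = (w^(1), …, w^(m)) and parameters g, each positively scale-invariant in W. Fix learning rates η_t^(i) > 0, η_t^g > 0 and momentum parameter ρ, and consider the PSI-SGDM updates: u_{t+1}^(i) = ρ u_t^(i) − η_t^(i) ‖w_t^(i)‖² ∇_{w^(i)} f_t(W_t, g_t), w_{t+1}^(i) = w_t^(i) + u_{t+1}^(i), g_{t+1} = g_t − η_t^g ∇_g f_t(W_t, g_t). Let (Ŵ_t, Û_t, ĝ_t) be the iterates of the same updates started from Ŵ_0 = T_a(W_0), Û_0 = T_a(U_0), ĝ_0 = g_0 for some a ∈ ℝ^m with all a_i > 0, where all blocks of W_0 are nonzero. Then for every t, Ŵ_t = T_a(W_t), Û_t = T_a(U_t), and ĝ_t = g_t. -/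

import Mathlib

open MeasureTheory RealInnerProductSpace
open scoped BigOperators

noncomputable section

/-- The space of weight tuples `W = (w⁽¹⁾, …, w⁽ᵐ⁾)` with `w⁽ⁱ⁾ ∈ ℝ^{dᵢ}`. -/
abbrev Wsp (m : ℕ) (d : Fin m → ℕ) : Type :=
  PiLp 2 fun i : Fin m => EuclideanSpace ℝ (Fin (d i))

/-- The space of extra parameters `g ∈ ℝᵖ`. -/
abbrev Gsp (p : ℕ) : Type := EuclideanSpace ℝ (Fin p)

/-- Blockwise positive rescaling `T_a(W) = (a₁ w⁽¹⁾, …, a_m w⁽ᵐ⁾)`. -/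
def rescale {m : ℕ} {d : Fin m → ℕ} (a : Fin m → ℝ) (W : Wsp m d) : Wsp m d :=
  WithLp.toLp 2 (fun i => a i • W i)

/-- `f` is positively scale-invariant in the weights. -/
def PSI {m p : ℕ} {d : Fin m → ℕ} (f : Wsp m d → Gsp p → ℝ) : Prop :=
  ∀ a : Fin m → ℝ, (∀ i, 0 < a i) → ∀ W g, f (rescale a W) g = f W g

/-- Partial (Fréchet) gradient of `f` in the `i`-th weight block. -/
def gradW {m p : ℕ} {d : Fin m → ℕ} (f : Wsp m d → Gsp p → ℝ)
    (W : Wsp m d) (g : Gsp p) (i : Fin m) : EuclideanSpace ℝ (Fin (d i)) :=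
  gradient (fun v => f (WithLp.toLp 2 (Function.update W.ofLp i v)) g) (W i)


/-- Partial (Fréchet) gradient of `f` in the parameters `g`. -/
def gradG {m p : ℕ} {d : Fin m → ℕ} (f : Wsp m d → Gsp p → ℝ)
    (W : Wsp m d) (g : Gsp p) : Gsp p :=
  gradient (fun u => f W u) g

lemma gradient_comp_smul {F : Type*} [NormedAddCommGroup F] [InnerProductSpace ℝ F]
    [CompleteSpace F] (φ : F → ℝ) (c : ℝ) (x : F)
    (h : DifferentiableAt ℝ φ (c • x)) :
    gradient (fun v => φ (c • v)) x = c • gradient φ (c • x) := by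
  have h1 : HasGradientAt φ (gradient φ (c • x)) (c • x) := h.hasGradientAt
  rw [hasGradientAt_iff_hasFDerivAt] at h1
  have h2 : HasFDerivAt (fun v : F => c • v) (c • ContinuousLinearMap.id ℝ F) x :=
    (hasFDerivAt_id x).const_smul c
  have h3 := h1.comp x h2
  have h4 : ((InnerProductSpace.toDual ℝ F) (gradient φ (c • x))).comp
      (c • ContinuousLinearMap.id ℝ F)
      = (InnerProductSpace.toDual ℝ F) (c • gradient φ (c • x)) := by
    ext y
    simp [real_inner_smul_left, real_inner_smul_right, mul_comm]
  rw [h4] at h3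
  exact (hasGradientAt_iff_hasFDerivAt.2 h3).gradient

lemma update_rescale {m : ℕ} {d : Fin m → ℕ} (a : Fin m → ℝ) (ha : ∀ i, 0 < a i)
    (W : Wsp m d) (i : Fin m) (v : EuclideanSpace ℝ (Fin (d i))) :
    (WithLp.toLp 2 (Function.update (rescale a W).ofLp i v) : Wsp m d)
      = rescale a (WithLp.toLp 2 (Function.update W.ofLp i ((a i)⁻¹ • v))) := by
  apply PiLp.ext; intro j
  rcases eq_or_ne j i with rfl | hj
  · simp [rescale, smul_smul, mul_inv_cancel₀ (ha j).ne']
  · simp [rescale, Function.update_of_ne hj]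

lemma diff_phi {m p : ℕ} {d : Fin m → ℕ} (f : Wsp m d → Gsp p → ℝ)
    (hdiff : Differentiable ℝ fun q : Wsp m d × Gsp p => f q.1 q.2)
    (W : Wsp m d) (g : Gsp p) (i : Fin m) :
    Differentiable ℝ (fun v => f (WithLp.toLp 2 (Function.update W.ofLp i v)) g) := by
  set e := PiLp.continuousLinearEquiv 2 ℝ (fun j : Fin m => EuclideanSpace ℝ (Fin (d j)))
  have h2 : Differentiable ℝ (fun v : EuclideanSpace ℝ (Fin (d i)) =>
      (Function.update (e W) i v : ∀ j, EuclideanSpace ℝ (Fin (d j)))) := by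
    rw [differentiable_pi]
    intro j
    rcases eq_or_ne j i with rfl | hj
    · simpa using differentiable_id
    · simp only [Function.update_of_ne hj]
      exact differentiable_const _
  have h3 : Differentiable ℝ (fun v : EuclideanSpace ℝ (Fin (d i)) =>
      (e.symm (Function.update (e W) i v) : Wsp m d)) :=
    e.symm.differentiable.comp h2
  have h4 : Differentiable ℝ (fun v : EuclideanSpace ℝ (Fin (d i)) =>
      ((e.symm (Function.update (e W) i v) : Wsp m d), g)) :=
    h3.prodMk (differentiable_const g)
  exact hdiff.comp h4

lemma gradW_rescale {m p : ℕ} {d : Fin m → ℕ} (f : Wsp m d → Gsp p → ℝ)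
    (hdiff : Differentiable ℝ fun q : Wsp m d × Gsp p => f q.1 q.2)
    (hPSI : PSI f) (a : Fin m → ℝ) (ha : ∀ i, 0 < a i)
    (W : Wsp m d) (g : Gsp p) (i : Fin m) :
    gradW f (rescale a W) g i = (a i)⁻¹ • gradW f W g i := by
  have hφ : Differentiable ℝ (fun v => f (WithLp.toLp 2 (Function.update W.ofLp i v)) g) :=
    diff_phi f hdiff W g i
  have key : (fun v => f (WithLp.toLp 2 (Function.update (rescale a W).ofLp i v)) g)
      = fun v => f (WithLp.toLp 2 (Function.update W.ofLp i ((a i)⁻¹ • v))) g := by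
    funext v
    rw [update_rescale a ha W i v, hPSI a ha]
  have hg2 := gradient_comp_smul (fun u => f (WithLp.toLp 2 (Function.update W.ofLp i u)) g)
    ((a i)⁻¹) (a i • W i) (hφ.differentiableAt)
  unfold gradW
  calc gradient (fun v => f (WithLp.toLp 2 (Function.update (rescale a W).ofLp i v)) g) ((rescale a W) i)
      = gradient (fun v => f (WithLp.toLp 2 (Function.update W.ofLp i ((a i)⁻¹ • v))) g) (a i • W i) := by
        rw [key]; rfl
    _ = (a i)⁻¹ • gradient (fun u => f (WithLp.toLp 2 (Function.update W.ofLp i u)) g)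
          ((a i)⁻¹ • (a i • W i)) := hg2
    _ = (a i)⁻¹ • gradient (fun v => f (WithLp.toLp 2 (Function.update W.ofLp i v)) g) (W i) := by
        rw [smul_smul, inv_mul_cancel₀ (ha i).ne', one_smul]

lemma gradG_rescale {m p : ℕ} {d : Fin m → ℕ} (f : Wsp m d → Gsp p → ℝ)
    (hPSI : PSI f) (a : Fin m → ℝ) (ha : ∀ i, 0 < a i)
    (W : Wsp m d) (g : Gsp p) :
    gradG f (rescale a W) g = gradG f W g := by
  unfold gradG
  congr 1
  funext u
  exact hPSI a ha W u

/-- PSI-SGDM iterates started from positively scale-equivalent points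
stay positively scale-equivalent: if `Ŵ₀ = T_a(W₀)`, `Û₀ = T_a(U₀)`, `ĝ₀ = g₀`, then
`Ŵ_t = T_a(W_t)`, `Û_t = T_a(U_t)` and `ĝ_t = g_t` for every `t`. -/
theorem stmt9 {m p : ℕ} {d : Fin m → ℕ} (f : ℕ → Wsp m d → Gsp p → ℝ)
    (hdiff : ∀ t, Differentiable ℝ fun q : Wsp m d × Gsp p => f t q.1 q.2)
    (hPSI : ∀ t, PSI (f t))
    (η : ℕ → Fin m → ℝ) (hη : ∀ t i, 0 < η t i)
    (ηg : ℕ → ℝ) (hηg : ∀ t, 0 < ηg t) (ρ : ℝ)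
    (W W' U U' : ℕ → Wsp m d) (g g' : ℕ → Gsp p)
    (a : Fin m → ℝ) (ha : ∀ i, 0 < a i)
    (hW0nz : ∀ i, W 0 i ≠ 0)
    (hU : ∀ t i, U (t + 1) i
      = ρ • U t i - (η t i * ‖W t i‖ ^ 2) • gradW (f t) (W t) (g t) i)
    (hW : ∀ t i, W (t + 1) i = W t i + U (t + 1) i)
    (hg : ∀ t, g (t + 1) = g t - ηg t • gradG (f t) (W t) (g t))
    (hU' : ∀ t i, U' (t + 1) i
      = ρ • U' t i - (η t i * ‖W' t i‖ ^ 2) • gradW (f t) (W' t) (g' t) i)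
    (hW' : ∀ t i, W' (t + 1) i = W' t i + U' (t + 1) i)
    (hg' : ∀ t, g' (t + 1) = g' t - ηg t • gradG (f t) (W' t) (g' t))
    (hW'0 : W' 0 = rescale a (W 0)) (hU'0 : U' 0 = rescale a (U 0))
    (hg'0 : g' 0 = g 0) :
    ∀ t, W' t = rescale a (W t) ∧ U' t = rescale a (U t) ∧ g' t = g t := by
  intro t
  induction t with
  | zero => exact ⟨hW'0, hU'0, hg'0⟩
  | succ t ih =>
    obtain ⟨hWt, hUt, hgt⟩ := ih
    have hWti : ∀ i, W' t i = a i • W t i := fun i => by rw [hWt]; rfl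
    have hUti : ∀ i, U' t i = a i • U t i := fun i => by rw [hUt]; rfl
    have hU'' : ∀ i, U' (t + 1) i = a i • U (t + 1) i := by
      intro i
      rw [hU' t i, hU t i, hUti i, hWti i, hgt, hWt,
        gradW_rescale (f t) (hdiff t) (hPSI t) a ha (W t) (g t) i]
      have hnorm : ‖a i • W t i‖ = a i * ‖W t i‖ := by
        rw [norm_smul, Real.norm_eq_abs, abs_of_pos (ha i)]
      rw [hnorm, smul_sub, smul_smul, smul_smul, smul_smul, smul_smul]
      have hai : a i ≠ 0 := (ha i).ne'
      congr 2
      · ring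
      · field_simp
    have hU''' : U' (t + 1) = rescale a (U (t + 1)) := by
      apply PiLp.ext; intro i; exact hU'' i
    refine ⟨?_, hU''', ?_⟩
    · apply PiLp.ext; intro i
      show W' (t + 1) i = a i • W (t + 1) i
      rw [hW' t i, hW t i, hWti i, hU'' i, smul_add]
    · rw [hg' t, hg t, hWt, hgt, gradG_rescale (f t) (hPSI t) a ha (W t) (g t)]



end
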